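/- Let m be a positive integer and let P(m,n) denote the number of m×n Cauchon diagrams C with det(M(C)) ≠ 0. Then the sequence (P(m,n))_{n≥1} satisfies a linear recurrence over ℚ: there exist a natural number d and rational constants c_1,…,c_d such that P(m,n) = Σ_{i=1}^d c_i · P(m,n−i) for all n ≥ d. -/

import Mathlib

/-- An `m × n` diagram: each square is black or white (`true` = white). -/
abbrev Diagram (m n : ℕ) := Fin m → Fin n → Bool

/-- The alphabet `Σ_m` of `m × 1` columns. -/
abbrev Col (m : ℕ) := Fin m → Bool

/-- The `m × n` diagram corresponding to a word of `n` columns (concatenated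
from left to right). -/
def toDiagram {m : ℕ} (w : List (Col m)) : Diagram m w.length :=
  fun i j => (w.get j) i

/-- A diagram is Cauchon if for every black square, either all squares to its
left in its row are black, or all squares above it in its column are black. -/
def IsCauchon {m n : ℕ} (D : Diagram m n) : Prop :=
  ∀ (i : Fin m) (j : Fin n), D i j = false →
    (∀ j' : Fin n, j' < j → D i j' = false) ∨
    (∀ i' : Fin m, i' < i → D i' j = false)

open Finset

/-- The finite set of white squares of a diagram. -/
def whites {m n : ℕ} (D : Diagram m n) : Finset (Fin m × Fin n) :=
  Finset.univ.filter fun p => D p.1 p.2 = true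

/-- The entry of the skew-adjacency matrix attached to a pair of squares:
`+1` if `p` is strictly to the left of `q` in the same row, or strictly above `q`
in the same column; `-1` in the two opposite situations; `0` otherwise. -/
def adjEntry {m n : ℕ} (p q : Fin m × Fin n) : ℤ :=
  if (p.1 = q.1 ∧ p.2 < q.2) ∨ (p.2 = q.2 ∧ p.1 < q.1) then 1
  else if (p.1 = q.1 ∧ q.2 < p.2) ∨ (p.2 = q.2 ∧ q.1 < p.1) then -1
  else 0

/-- The skew-adjacency matrix `M(D)` of a diagram `D`, with rows and columns
indexed by the white squares of `D`. -/
def skewAdj {m n : ℕ} (D : Diagram m n) :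
    Matrix {p : Fin m × Fin n // p ∈ whites D} {p : Fin m × Fin n // p ∈ whites D} ℤ :=
  fun p q => adjEntry p.1 q.1

open Classical in
/-- `P m n`: the number of primitive `m × n` Cauchon diagrams, i.e. `m × n`
Cauchon diagrams whose skew-adjacency matrix has nonzero determinant.  (This is
the number of torus-invariant primitive ideals in `m × n` quantum matrices.) -/
noncomputable def P (m n : ℕ) : ℕ :=
  ((Finset.univ : Finset (Diagram m n)).filter
    (fun D => IsCauchon D ∧ (skewAdj D).det ≠ 0)).card


namespace P18


/-! ### Signed permutations -/

abbrev SP (m : ℕ) := Equiv.Perm (Fin m) × (Fin m → Bool)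

variable {m : ℕ}

/-- Action of a signed permutation on rational vectors. -/
def act (h : SP m) (v : Fin m → ℚ) : Fin m → ℚ :=
  fun t => (if h.2 (h.1.symm t) then -1 else 1) * v (h.1.symm t)

def spOne : SP m := (1, fun _ => false)

def spMul (h g : SP m) : SP m := (h.1 * g.1, fun j => xor (g.2 j) (h.2 (g.1 j)))

lemma act_spOne (v : Fin m → ℚ) : act (spOne : SP m) v = v := by
  funext t; simp [act, spOne]; rfl

lemma act_spMul (h g : SP m) (v : Fin m → ℚ) :
    act (spMul h g) v = act h (act g v) := by
  funext t
  simp only [act, spMul, Equiv.Perm.mul_apply]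
  have h1 : (h.1 * g.1).symm t = g.1.symm (h.1.symm t) := rfl
  simp only [h1, g.1.apply_symm_apply]
  rcases hb : g.2 (g.1.symm (h.1.symm t)) <;> rcases hb' : h.2 (h.1.symm t) <;>
    simp [hb, hb'] <;> ring

/-! ### The sign function -/

def sg (t t' : Fin m) : ℚ := if t < t' then 1 else if t' < t then -1 else 0

lemma sg_antisymm (t t' : Fin m) : sg t' t = - sg t t' := by
  unfold sg
  rcases lt_trichotomy t t' with h | h | h
  · rw [if_neg (asymm h), if_pos h, if_pos h]
  · subst h; simp
  · rw [if_pos h, if_neg (asymm h), if_pos h]; norm_num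

/-- Skew-symmetric injectivity. -/
lemma skew_inj (R : Finset (Fin m)) (z : Fin m → ℚ) (ε : ℚ) (hε : ε ≠ 0)
    (hsupp : ∀ t, t ∉ R → z t = 0)
    (heq : ∀ t ∈ R, (∑ t', sg t t' * z t') = ε * z t) : z = 0 := by
  set S := ∑ t, ∑ t', sg t t' * z t * z t' with hSdef
  have hanti : S = -S := by
    have h1 : S = ∑ t', ∑ t, sg t t' * z t * z t' := Finset.sum_comm
    have h2 : ∑ t', ∑ t, sg t t' * z t * z t'
        = ∑ t, ∑ t', -(sg t t' * z t * z t') := by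
      refine Finset.sum_congr rfl fun t _ => Finset.sum_congr rfl fun t' _ => ?_
      rw [sg_antisymm]; ring
    have h3 : ∑ t, ∑ t', -(sg t t' * z t * z t') = -S := by
      rw [hSdef]; simp only [Finset.sum_neg_distrib]
    exact h1.trans (h2.trans h3)
  have hS0 : S = 0 := by linarith
  have hS2 : S = ε * ∑ t, z t ^ 2 := by
    calc S = ∑ t, z t * (∑ t', sg t t' * z t') := by
            refine Finset.sum_congr rfl fun t _ => ?_
            rw [Finset.mul_sum]; exact Finset.sum_congr rfl fun t' _ => by ring
    _ = ∑ t, ε * z t ^ 2 := by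
          refine Finset.sum_congr rfl fun t _ => ?_
          by_cases ht : t ∈ R
          · rw [heq t ht]; ring
          · rw [hsupp t ht]; ring
    _ = ε * ∑ t, z t ^ 2 := by rw [Finset.mul_sum]
  have hz : ∑ t, z t ^ 2 = 0 := by
    rcases mul_eq_zero.mp (hS2 ▸ hS0) with h | h
    · exact absurd h hε
    · exact h
  funext t
  have := (Finset.sum_eq_zero_iff_of_nonneg (fun t _ => sq_nonneg (z t))).mp hz t (Finset.mem_univ t)
  exact pow_eq_zero_iff (by norm_num) |>.mp this

/-! ### The ℕ-indexed telescoping key lemma -/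

def sgN (i i' : ℕ) : ℚ := if i < i' then 1 else if i' < i then -1 else 0

lemma telescope (G : ℕ → ℚ) (a b : ℕ) (hab : a ≤ b) :
    ∑ j ∈ Finset.Ico a b, (G (j + 1) - G j) = G b - G a := by
  rw [Finset.sum_Ico_eq_sum_range, Finset.sum_congr rfl (fun t _ => by
    show G (a + t + 1) - G (a + t) = (fun s => G (a + s)) (t+1) - (fun s => G (a+s)) t
    simp [Nat.add_assoc]), Finset.sum_range_sub (fun s => G (a + s)) (b - a)]
  congr 2
  omega

lemma keyN (k : ℕ) (G : ℕ → ℚ) (i : ℕ) (hi : i < k) :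
    (∑ i' ∈ Finset.range k, sgN i i' *
        (G i' - (if i' = 0 then -G (k - 1) else G (i' - 1))))
      + G i + (if i = 0 then -G (k - 1) else G (i - 1)) = 0 := by
  set G' : ℕ → ℚ := fun l => if l = 0 then -G (k - 1) else G (l - 1) with hG'
  have hsplit : ∑ i' ∈ Finset.range k, sgN i i' * (G i' - G' i')
      = (∑ i' ∈ Finset.range i, sgN i i' * (G i' - G' i'))
        + ∑ i' ∈ Finset.Ico i k, sgN i i' * (G i' - G' i') := by
    have h := Finset.sum_Ico_consecutive (fun i' => sgN i i' * (G i' - G' i'))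
      (Nat.zero_le i) (le_of_lt hi)
    simp only [← Finset.range_eq_Ico] at h
    exact h.symm
  have hlow : ∑ i' ∈ Finset.range i, sgN i i' * (G i' - G' i')
      = -(∑ i' ∈ Finset.range i, (G i' - G' i')) := by
    rw [← Finset.sum_neg_distrib]
    refine Finset.sum_congr rfl fun i' hi' => ?_
    have : i' < i := Finset.mem_range.mp hi'
    rw [sgN, if_neg (by omega), if_pos this]; ring
  have hhigh : ∑ i' ∈ Finset.Ico i k, sgN i i' * (G i' - G' i')
      = ∑ i' ∈ Finset.Ico (i+1) k, (G i' - G' i') := by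
    rw [Finset.sum_eq_sum_Ico_succ_bot hi]
    rw [sgN, if_neg (lt_irrefl i), if_neg (lt_irrefl i)]
    rw [zero_mul, zero_add]
    refine Finset.sum_congr rfl fun i' hi' => ?_
    have : i < i' := (Finset.mem_Ico.mp hi').1
    rw [sgN, if_pos this]; ring
  have hhigh2 : ∑ i' ∈ Finset.Ico (i+1) k, (G i' - G' i') = G (k-1) - G i := by
    have : ∑ i' ∈ Finset.Ico (i+1) k, (G i' - G' i')
        = ∑ j ∈ Finset.Ico i (k-1), (G (j+1) - G j) := by
      rw [Finset.sum_Ico_eq_sum_range, Finset.sum_Ico_eq_sum_range]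
      have hk : k - (i+1) = k - 1 - i := by omega
      rw [hk]
      refine Finset.sum_congr rfl fun t ht => ?_
      have ht' : t < k - 1 - i := Finset.mem_range.mp ht
      have h1 : i + 1 + t ≠ 0 := by omega
      rw [hG']
      simp only [if_neg h1]
      have : i + 1 + t - 1 = i + t := by omega
      rw [this]
      have : i + 1 + t = i + t + 1 := by omega
      rw [this]
    rw [this, telescope G i (k-1) (by omega)]
  have hlow2 : ∑ i' ∈ Finset.range i, (G i' - G' i')
      = (if i = 0 then 0 else G (k-1) + G (i-1)) := by
    rcases Nat.eq_zero_or_pos i with h0 | hpos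
    · subst h0; simp
    · rw [if_neg (by omega)]
      obtain ⟨i₀, rfl⟩ : ∃ i₀, i = i₀ + 1 := ⟨i - 1, by omega⟩
      rw [Finset.sum_range_succ']
      have hg0 : G' 0 = -G (k-1) := by simp [hG']
      have hfirst : G 0 - G' 0 = G 0 + G (k-1) := by rw [hg0]; ring
      have hrest : ∑ i' ∈ Finset.range i₀, (G (i'+1) - G' (i'+1))
          = ∑ i' ∈ Finset.range i₀, (G (i'+1) - G i') := by
        refine Finset.sum_congr rfl fun i' _ => ?_
        have : G' (i'+1) = G i' := by simp [hG']
        rw [this]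
      rw [hfirst, hrest]
      have : ∑ i' ∈ Finset.range i₀, (G (i'+1) - G i') = G i₀ - G 0 :=
        Finset.sum_range_sub G i₀
      rw [this]
      have : i₀ + 1 - 1 = i₀ := by omega
      rw [this]; ring
  rw [hsplit, hlow, hhigh, hhigh2, hlow2]
  rcases Nat.eq_zero_or_pos i with h0 | hpos
  · subst h0; simp
  · rw [if_neg (by omega), if_neg (by omega)]; ring


/-! ### The column shift -/

def Rset (a : Col m) : Finset (Fin m) := Finset.univ.filter (fun t => a t = true)

lemma mem_Rset {a : Col m} {t : Fin m} : t ∈ Rset a ↔ a t = true := by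
  simp [Rset]

def colIso (a : Col m) : Fin (Rset a).card ≃o {x // x ∈ Rset a} :=
  (Rset a).orderIsoOfFin rfl

/-- The sign part of the column shift. -/
def colSign (a : Col m) : Fin m → Bool := fun t =>
  if h : t ∈ Rset a
    then decide ((((colIso a).symm ⟨t, h⟩ : Fin (Rset a).card) : ℕ) = (Rset a).card - 1)
    else false

/-- The signed cyclic shift attached to a column. -/
def spcol (a : Col m) : SP m :=
  ((finRotate (Rset a).card).extendDomain (colIso a).toEquiv, colSign a)

lemma spcol_apply_mem (a : Col m) (i : Fin (Rset a).card) :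
    (spcol a).1 ((colIso a) i : Fin m) = ((colIso a) (finRotate (Rset a).card i) : Fin m) := by
  have h : (((colIso a) i : Fin m) ∈ Rset a) := ((colIso a) i).2
  have h1 := Equiv.Perm.extendDomain_apply_subtype (finRotate (Rset a).card)
    (colIso a).toEquiv h
  have h2 : (colIso a).toEquiv.symm (⟨((colIso a) i : Fin m), h⟩ : {x // x ∈ Rset a}) = i := by
    rw [Equiv.symm_apply_eq]
    exact Subtype.ext rfl
  rw [h2] at h1
  exact h1

lemma spcol_apply_not_mem {a : Col m} {t : Fin m} (h : t ∉ Rset a) :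
    (spcol a).1 t = t :=
  Equiv.Perm.extendDomain_apply_not_subtype _ _ h

lemma spcol_symm_not_mem {a : Col m} {t : Fin m} (h : t ∉ Rset a) :
    (spcol a).1.symm t = t :=
  (Equiv.symm_apply_eq _).2 (spcol_apply_not_mem h).symm

lemma spcol_sign_not_mem {a : Col m} {t : Fin m} (h : t ∉ Rset a) :
    (spcol a).2 t = false := by
  show colSign a t = false
  rw [colSign]; exact dif_neg h

/-- Off the column support, the shift acts as the identity. -/
lemma act_spcol_not_mem {a : Col m} {t : Fin m} (h : a t = false) (v : Fin m → ℚ) :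
    act (spcol a) v t = v t := by
  have hR : t ∉ Rset a := by rw [mem_Rset, h]; simp
  rw [act, spcol_symm_not_mem hR, spcol_sign_not_mem hR]
  simp

lemma spcol_symm_apply (a : Col m) (i : Fin (Rset a).card) :
    (spcol a).1.symm ((colIso a) i : Fin m)
      = ((colIso a) ((finRotate (Rset a).card).symm i) : Fin m) := by
  rw [Equiv.symm_apply_eq, spcol_apply_mem, Equiv.apply_symm_apply]

lemma spcol_sign_mem (a : Col m) (i : Fin (Rset a).card) :
    (spcol a).2 ((colIso a) i : Fin m) = decide ((i : ℕ) = (Rset a).card - 1) := by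
  show colSign a _ = _
  rw [colSign]
  rw [dif_pos ((colIso a) i).2]
  have h4 : ∀ (pf : ((colIso a) i : Fin m) ∈ Rset a),
      (colIso a).symm ⟨((colIso a) i : Fin m), pf⟩ = i := by
    intro pf
    have h3 : (⟨((colIso a) i : Fin m), pf⟩ : {x // x ∈ Rset a}) = (colIso a) i :=
      Subtype.ext rfl
    rw [h3, OrderIso.symm_apply_apply]
  rw [h4]

lemma finRotate_symm_val' {k : ℕ} (hk : 0 < k) (i : Fin k) :
    (((finRotate k).symm i) : ℕ) = if (i:ℕ) = 0 then k - 1 else (i:ℕ) - 1 := by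
  obtain ⟨k', rfl⟩ : ∃ k', k = k' + 1 := ⟨k-1, by omega⟩
  set j := (finRotate (k'+1)).symm i with hj
  have hji : (finRotate (k'+1)) j = i := Equiv.apply_symm_apply _ _
  rw [finRotate_succ_apply] at hji
  have hval := congrArg Fin.val hji
  rw [Fin.val_add_one] at hval
  by_cases hlast : j = Fin.last k'
  · rw [if_pos hlast] at hval
    rw [if_pos (by omega), hlast]
    simp
  · rw [if_neg hlast] at hval
    have hjlt : (j : ℕ) < k' := by
      have := j.is_lt
      have : (j : ℕ) ≠ k' := fun h => hlast (Fin.ext h)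
      omega
    rw [if_neg (by omega)]
    omega

lemma act_spcol_mem (a : Col m) (v : Fin m → ℚ) (i : Fin (Rset a).card) :
    act (spcol a) v ((colIso a) i : Fin m)
      = (if ((((finRotate (Rset a).card).symm i) : ℕ) = (Rset a).card - 1) then -1 else 1)
        * v ((colIso a) ((finRotate (Rset a).card).symm i) : Fin m) := by
  rw [act, spcol_symm_apply, spcol_sign_mem]
  simp only [decide_eq_true_eq]

/-- The fundamental identity (Cayley transform of the column's skew matrix
is the signed cyclic shift). -/
lemma key (a : Col m) (v : Fin m → ℚ) (t : Fin m) (ht : a t = true) :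
    (∑ t', sg t t' * (v t' - act (spcol a) v t')) + v t + act (spcol a) v t = 0 := by
  classical
  set k := (Rset a).card with hk
  set e := colIso a with he
  set G : ℕ → ℚ := fun l => if h : l < k then v ((e ⟨l, h⟩ : Fin m)) else 0 with hG
  have hvG : ∀ i : Fin k, v ((e i : Fin m)) = G (i : ℕ) := by
    intro i
    rw [hG]
    simp only
    rw [dif_pos i.is_lt]
  have hact : ∀ i : Fin k, act (spcol a) v ((e i : Fin m))
      = (if (i:ℕ) = 0 then -G (k-1) else G ((i:ℕ)-1)) := by
    intro i
    rw [act_spcol_mem]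
    have hv : (((finRotate k).symm i) : ℕ) = if (i:ℕ) = 0 then k - 1 else (i:ℕ) - 1 :=
      finRotate_symm_val' i.pos i
    have hvg := hvG ((finRotate k).symm i)
    by_cases h0 : (i : ℕ) = 0
    · rw [if_pos h0] at hv
      have hcond : (((finRotate k).symm i) : ℕ) = k - 1 := hv
      rw [if_pos hcond, hvg, hv, if_pos h0]
      ring
    · rw [if_neg h0] at hv
      have hcond : ¬ ((((finRotate k).symm i) : ℕ) = k - 1) := by
        rw [hv]
        have := i.is_lt
        omega
      rw [if_neg hcond, hvg, hv, if_neg h0]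
      ring
  have htR : t ∈ Rset a := mem_Rset.2 ht
  set i₀ : Fin k := e.symm ⟨t, htR⟩ with hi₀
  have ht0 : (e i₀ : Fin m) = t := by
    rw [hi₀, OrderIso.apply_symm_apply]
  have hres : (∑ t', sg t t' * (v t' - act (spcol a) v t'))
      = ∑ t' ∈ Rset a, sg t t' * (v t' - act (spcol a) v t') := by
    symm
    apply Finset.sum_subset (Finset.subset_univ _)
    intro x _ hx
    have hax : a x = false := by
      rcases Bool.eq_false_or_eq_true (a x) with h | h
      · exact absurd (mem_Rset.2 h) hx
      · exact h
    rw [act_spcol_not_mem hax]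
    ring
  have hiso : ∑ t' ∈ Rset a, sg t t' * (v t' - act (spcol a) v t')
      = ∑ i : Fin k, sg t (e i : Fin m)
          * (v (e i : Fin m) - act (spcol a) v (e i : Fin m)) := by
    rw [← Finset.sum_coe_sort (Rset a)
      (fun t' => sg t t' * (v t' - act (spcol a) v t'))]
    exact (Equiv.sum_comp e.toEquiv
      (fun x : {x // x ∈ Rset a} =>
        sg t (x : Fin m) * (v (x : Fin m) - act (spcol a) v (x : Fin m)))).symm
  have hsg : ∀ i : Fin k, sg t (e i : Fin m) = sgN (i₀ : ℕ) (i : ℕ) := by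
    intro i
    rw [← ht0]
    unfold sg sgN
    have h1 : ((e i₀ : Fin m) < (e i : Fin m)) ↔ ((i₀ : ℕ) < (i : ℕ)) := by
      rw [Subtype.coe_lt_coe, e.lt_iff_lt]
      exact Fin.lt_iff_val_lt_val
    have h2 : ((e i : Fin m) < (e i₀ : Fin m)) ↔ ((i : ℕ) < (i₀ : ℕ)) := by
      rw [Subtype.coe_lt_coe, e.lt_iff_lt]
      exact Fin.lt_iff_val_lt_val
    simp only [h1, h2]
  have hsum : ∑ i : Fin k, sg t (e i : Fin m)
        * (v (e i : Fin m) - act (spcol a) v (e i : Fin m))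
      = ∑ i' ∈ Finset.range k, sgN (i₀:ℕ) i'
          * (G i' - (if i' = 0 then -G (k-1) else G (i'-1))) := by
    rw [← Fin.sum_univ_eq_sum_range
      (fun i' => sgN (i₀:ℕ) i' * (G i' - (if i' = 0 then -G (k-1) else G (i'-1)))) k]
    refine Finset.sum_congr rfl fun i _ => ?_
    rw [hsg i, hact i, hvG i]
  have hmain := keyN k G (i₀ : ℕ) i₀.is_lt
  rw [hres, hiso, hsum, ← ht0, hact i₀, hvG i₀]
  exact hmain

/-! ### Words of columns, diagrams, and the main induction -/

def Dg {n : ℕ} (w : Fin n → Col m) : Diagram m n := fun i j => w j i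

def runSP : {n : ℕ} → (Fin n → Col m) → SP m
  | 0, _ => spOne
  | n+1, w => spMul (spcol (w (Fin.last n))) (runSP (Fin.init w))

def Supp {n : ℕ} (w : Fin n → Col m) (x : Fin m × Fin n → ℚ) : Prop :=
  ∀ p, w p.2 p.1 = false → x p = 0

def RowEq {n : ℕ} (w : Fin n → Col m) (x : Fin m × Fin n → ℚ) (c : Fin m → ℚ) : Prop :=
  ∀ p : Fin m × Fin n, w p.2 p.1 = true →
    (∑ q, ((adjEntry p q : ℤ) : ℚ) * x q) + c p.1 = 0

def rsum {n : ℕ} (x : Fin m × Fin n → ℚ) (t : Fin m) : ℚ := ∑ j, x (t, j)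

lemma adjEntry_castSucc {n : ℕ} (i i' : Fin m) (j j' : Fin n) :
    ((adjEntry (i, j.castSucc) (i', j'.castSucc) : ℤ) : ℚ)
      = ((adjEntry (i, j) (i', j') : ℤ) : ℚ) := by
  unfold adjEntry
  simp only [Fin.castSucc_lt_castSucc_iff, Fin.castSucc_inj]

lemma adjEntry_old_new {n : ℕ} (i t : Fin m) (j : Fin n) :
    ((adjEntry (i, j.castSucc) (t, Fin.last n) : ℤ) : ℚ) = if i = t then 1 else 0 := by
  unfold adjEntry
  have h1 : j.castSucc < Fin.last n := Fin.castSucc_lt_last j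
  have h2 : ¬ (j.castSucc = Fin.last n) := ne_of_lt h1
  have h3 : ¬ (Fin.last n < j.castSucc) := asymm h1
  by_cases h : i = t
  · rw [if_pos (Or.inl ⟨h, h1⟩), if_pos h]
    norm_num
  · rw [if_neg, if_neg, if_neg h]
    · norm_num
    · rintro (⟨hh, _⟩ | ⟨hh, _⟩)
      · exact h hh
      · exact h2 hh
    · rintro (⟨hh, _⟩ | ⟨hh, _⟩)
      · exact h hh
      · exact h2 hh

lemma adjEntry_new_old {n : ℕ} (t i : Fin m) (j : Fin n) :
    ((adjEntry (t, Fin.last n) (i, j.castSucc) : ℤ) : ℚ) = if t = i then -1 else 0 := by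
  unfold adjEntry
  dsimp only
  have h1 : j.castSucc < Fin.last n := Fin.castSucc_lt_last j
  have h2 : ¬ (Fin.last n = j.castSucc) := fun hh => (ne_of_lt h1) hh.symm
  have h3 : ¬ (Fin.last n < j.castSucc) := asymm h1
  by_cases h : t = i
  · rw [if_neg, if_pos (Or.inl ⟨h, h1⟩), if_pos h]
    · norm_num
    · rintro (⟨_, hh⟩ | ⟨hh, _⟩)
      · exact h3 hh
      · exact h2 hh
  · rw [if_neg, if_neg, if_neg h]
    · norm_num
    · rintro (⟨hh, _⟩ | ⟨hh, _⟩)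
      · exact h hh
      · exact h2 hh
    · rintro (⟨_, hh⟩ | ⟨hh, _⟩)
      · exact h3 hh
      · exact h2 hh

lemma adjEntry_new_new {n : ℕ} (t t' : Fin m) :
    ((adjEntry (t, Fin.last n) (t', Fin.last n) : ℤ) : ℚ) = sg t t' := by
  unfold adjEntry sg
  dsimp only
  rcases lt_trichotomy t t' with h | h | h
  · rw [if_pos (Or.inr ⟨rfl, h⟩), if_pos h]
    norm_num
  · subst h
    rw [if_neg, if_neg]
    · simp
    · rintro (⟨_, hh⟩ | ⟨_, hh⟩) <;> exact lt_irrefl _ hh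
    · rintro (⟨_, hh⟩ | ⟨_, hh⟩) <;> exact lt_irrefl _ hh
  · rw [if_neg, if_pos (Or.inr ⟨rfl, h⟩), if_neg (asymm h), if_pos h]
    · norm_num
    · rintro (⟨_, hh⟩ | ⟨_, hh⟩)
      · exact lt_irrefl _ hh
      · exact asymm h hh

lemma sum_split {n : ℕ} (f : Fin m × Fin (n+1) → ℚ) :
    (∑ q, f q) = (∑ q : Fin m × Fin n, f (q.1, q.2.castSucc)) + ∑ t, f (t, Fin.last n) := by
  rw [Fintype.sum_prod_type,
    Fintype.sum_prod_type (f := fun q : Fin m × Fin n => f (q.1, q.2.castSucc)),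
    ← Finset.sum_add_distrib]
  exact Finset.sum_congr rfl fun i _ => Fin.sum_univ_castSucc (fun j => f (i, j))

lemma sum_guard {n : ℕ} (g : Fin m × Fin n → ℚ) (i : Fin m) :
    (∑ q : Fin m × Fin n, (if i = q.1 then (-1:ℚ) else 0) * g q) = -∑ j, g (i, j) := by
  rw [Fintype.sum_prod_type]
  have h : ∀ i' : Fin m, (∑ j : Fin n, (if i = i' then (-1:ℚ) else 0) * g (i', j))
      = if i = i' then -∑ j, g (i', j) else 0 := by
    intro i'
    by_cases hii : i = i'
    · rw [if_pos hii]
      simp [hii, Finset.sum_neg_distrib]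
    · rw [if_neg hii]
      simp [hii]
  rw [Finset.sum_congr rfl (fun i' _ => h i')]
  rw [Finset.sum_ite_eq]
  simp

/-- The main inductive package. -/
theorem main : ∀ {n : ℕ} (w : Fin n → Col m),
    (∀ u : Fin m → ℚ, ∃ x : Fin m × Fin n → ℚ, Supp w x ∧
       RowEq w x (fun t => u t + act (runSP w) u t) ∧
       ∀ t, rsum x t = u t - act (runSP w) u t)
  ∧ (∀ x c, Supp w x → RowEq w x c →
       ∃ u : Fin m → ℚ, (∀ t, c t = u t + act (runSP w) u t) ∧
         (∀ t, rsum x t = u t - act (runSP w) u t))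
  ∧ (∀ x, Supp w x → RowEq w x (fun _ => 0) → (∀ t, rsum x t = 0) → x = 0) := by
  intro n
  induction n with
  | zero =>
    intro w
    have hr : runSP w = spOne := rfl
    refine ⟨?_, ?_, ?_⟩
    · intro u
      refine ⟨fun _ => 0, fun p _ => rfl, fun p _ => p.2.elim0, fun t => ?_⟩
      rw [hr, act_spOne]
      simp [rsum]
    · intro x c _ _
      refine ⟨fun t => c t / 2, fun t => ?_, fun t => ?_⟩
      · rw [hr, act_spOne]; ring
      · rw [hr, act_spOne]; simp [rsum]
    · intro x _ _ _
      funext p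
      exact p.2.elim0
  | succ n IH =>
    intro w
    obtain ⟨ih1, ih2, ih3⟩ := IH (Fin.init w)
    set w0 : Fin n → Col m := Fin.init w with hw0
    set a : Col m := w (Fin.last n) with ha
    have hrun : ∀ u : Fin m → ℚ, act (runSP w) u = act (spcol a) (act (runSP w0) u) := by
      intro u
      show act (spMul (spcol (w (Fin.last n))) (runSP (Fin.init w))) u = _
      rw [act_spMul]
    have hcol : ∀ (i : Fin m) (j : Fin n), w j.castSucc i = w0 j i := fun i j => rfl
    refine ⟨?_, ?_, ?_⟩
    · -- (C1) existence
      intro u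
      set Hu := act (runSP w0) u with hHu
      set Su := act (spcol a) Hu with hSu
      obtain ⟨x, hxs, hxr, hxm⟩ := ih1 u
      set x' : Fin m × Fin (n+1) → ℚ :=
        fun p => Fin.lastCases (Hu p.1 - Su p.1) (fun j => x (p.1, j)) p.2 with hx'
      have hx'c : ∀ (i : Fin m) (j : Fin n), x' (i, j.castSucc) = x (i, j) := by
        intro i j
        simp only [hx']
        exact Fin.lastCases_castSucc j
      have hx'l : ∀ (t : Fin m), x' (t, Fin.last n) = Hu t - Su t := by
        intro t
        simp only [hx']
        exact Fin.lastCases_last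
      refine ⟨x', ?_, ?_, ?_⟩
      · rintro ⟨i, pj⟩ hp
        induction pj using Fin.lastCases with
        | last =>
          rw [hx'l]
          have hai : a i = false := hp
          rw [hSu, act_spcol_not_mem hai]
          ring
        | cast j =>
          rw [hx'c]
          exact hxs (i, j) hp
      · rintro ⟨i, pj⟩ hp
        induction pj using Fin.lastCases with
        | last =>
          have hai : a i = true := hp
          rw [sum_split (fun q => ((adjEntry (i, Fin.last n) q : ℤ) : ℚ) * x' q)]
          have hA : (∑ q : Fin m × Fin n,
              ((adjEntry (i, Fin.last n) (q.1, q.2.castSucc) : ℤ) : ℚ) * x' (q.1, q.2.castSucc))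
              = -rsum x i := by
            have h1 : ∀ q : Fin m × Fin n,
                ((adjEntry (i, Fin.last n) (q.1, q.2.castSucc) : ℤ) : ℚ) * x' (q.1, q.2.castSucc)
                = (if i = q.1 then (-1:ℚ) else 0) * x q := by
              intro q
              rw [adjEntry_new_old, hx'c]
            rw [Finset.sum_congr rfl (fun q _ => h1 q), sum_guard]
            rfl
          have hB : (∑ t, ((adjEntry (i, Fin.last n) (t, Fin.last n) : ℤ) : ℚ) * x' (t, Fin.last n))
              = ∑ t, sg i t * (Hu t - Su t) := by
            refine Finset.sum_congr rfl fun t _ => ?_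
            rw [adjEntry_new_new, hx'l]
          rw [hA, hB]
          have hkey := key a Hu i hai
          rw [← hSu] at hkey
          have hsum := hxm i
          rw [← hHu] at hsum
          have hc : (fun t => u t + act (runSP w) u t) i = u i + Su i := by
            rw [hrun u, ← hHu, ← hSu]
          rw [hc]
          linarith [hkey, hsum]
        | cast j =>
          rw [sum_split (fun q => ((adjEntry (i, j.castSucc) q : ℤ) : ℚ) * x' q)]
          have hA : (∑ q : Fin m × Fin n,
              ((adjEntry (i, j.castSucc) (q.1, q.2.castSucc) : ℤ) : ℚ) * x' (q.1, q.2.castSucc))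
              = ∑ q : Fin m × Fin n, ((adjEntry (i, j) q : ℤ) : ℚ) * x q := by
            refine Finset.sum_congr rfl fun q _ => ?_
            rw [adjEntry_castSucc, hx'c]
          have hB : (∑ t, ((adjEntry (i, j.castSucc) (t, Fin.last n) : ℤ) : ℚ) * x' (t, Fin.last n))
              = Hu i - Su i := by
            have h1 : ∀ t, ((adjEntry (i, j.castSucc) (t, Fin.last n) : ℤ) : ℚ) * x' (t, Fin.last n)
                = if i = t then (Hu t - Su t) else 0 := by
              intro t
              rw [adjEntry_old_new, hx'l]
              split_ifs <;> ring
            rw [Finset.sum_congr rfl (fun t _ => h1 t), Finset.sum_ite_eq, if_pos (Finset.mem_univ i)]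
          rw [hA, hB]
          have hold := hxr (i, j) hp
          rw [← hHu] at hold
          have hco : (fun t => u t + act (runSP w0) u t) i = u i + Hu i := by rw [← hHu]
          rw [hco] at hold
          have hc : (fun t => u t + act (runSP w) u t) i = u i + Su i := by
            rw [hrun u, ← hHu, ← hSu]
          rw [hc]
          linarith [hold]
      · intro t
        have : rsum x' t = rsum x t + (Hu t - Su t) := by
          rw [rsum, Fin.sum_univ_castSucc (fun j => x' (t, j)), hx'l]
          congr 1
          exact Finset.sum_congr rfl fun j _ => hx'c t j
        rw [this, hxm t, ← hHu, hrun u, ← hHu, ← hSu]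
        ring
    · -- (C2) the graph property
      intro x' c' hsupp hrow
      set y : Fin m → ℚ := fun t => x' (t, Fin.last n) with hy
      set x : Fin m × Fin n → ℚ := fun q => x' (q.1, q.2.castSucc) with hx
      have hxs : Supp w0 x := by
        rintro ⟨i, j⟩ hij
        exact hsupp (i, j.castSucc) hij
      have hysupp : ∀ t, a t = false → y t = 0 := by
        intro t hat
        exact hsupp (t, Fin.last n) hat
      have hxr : RowEq w0 x (fun t => y t + c' t) := by
        rintro ⟨i, j⟩ hij
        have h := hrow (i, j.castSucc) hij
        rw [sum_split (fun q => ((adjEntry (i, j.castSucc) q : ℤ) : ℚ) * x' q)] at h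
        have hA : (∑ q : Fin m × Fin n,
            ((adjEntry (i, j.castSucc) (q.1, q.2.castSucc) : ℤ) : ℚ) * x' (q.1, q.2.castSucc))
            = ∑ q : Fin m × Fin n, ((adjEntry (i, j) q : ℤ) : ℚ) * x q := by
          refine Finset.sum_congr rfl fun q _ => ?_
          rw [adjEntry_castSucc]
        have hB : (∑ t, ((adjEntry (i, j.castSucc) (t, Fin.last n) : ℤ) : ℚ) * x' (t, Fin.last n))
            = y i := by
          have h1 : ∀ t, ((adjEntry (i, j.castSucc) (t, Fin.last n) : ℤ) : ℚ) * x' (t, Fin.last n)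
              = if i = t then y t else 0 := by
            intro t
            rw [adjEntry_old_new]
            split_ifs <;> simp [hy]
          rw [Finset.sum_congr rfl (fun t _ => h1 t), Finset.sum_ite_eq, if_pos (Finset.mem_univ i)]
        rw [hA, hB] at h
        show (∑ q : Fin m × Fin n, ((adjEntry (i, j) q : ℤ) : ℚ) * x q) + (y i + c' i) = 0
        linarith [h]
      obtain ⟨u, huc, hum⟩ := ih2 x (fun t => y t + c' t) hxs hxr
      set Hu := act (runSP w0) u with hHu
      set Su := act (spcol a) Hu with hSu
      have hnew : ∀ t, a t = true →
          -rsum x t + (∑ t', sg t t' * y t') + c' t = 0 := by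
        intro t hat
        have h := hrow (t, Fin.last n) hat
        rw [sum_split (fun q => ((adjEntry (t, Fin.last n) q : ℤ) : ℚ) * x' q)] at h
        have hA : (∑ q : Fin m × Fin n,
            ((adjEntry (t, Fin.last n) (q.1, q.2.castSucc) : ℤ) : ℚ) * x' (q.1, q.2.castSucc))
            = -rsum x t := by
          have h1 : ∀ q : Fin m × Fin n,
              ((adjEntry (t, Fin.last n) (q.1, q.2.castSucc) : ℤ) : ℚ) * x' (q.1, q.2.castSucc)
              = (if t = q.1 then (-1:ℚ) else 0) * x q := by
            intro q
            rw [adjEntry_new_old]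
          rw [Finset.sum_congr rfl (fun q _ => h1 q), sum_guard]
          rfl
        have hB : (∑ t', ((adjEntry (t, Fin.last n) (t', Fin.last n) : ℤ) : ℚ) * x' (t', Fin.last n))
            = ∑ t', sg t t' * y t' := by
          refine Finset.sum_congr rfl fun t' _ => ?_
          rw [adjEntry_new_new]
        rw [hA, hB] at h
        simpa using h
      -- y agrees with Hu - Su
      have hyeq : ∀ t, y t = Hu t - Su t := by
        have hz := skew_inj (Rset a) (fun t => y t - (Hu t - Su t)) 1 one_ne_zero ?_ ?_
        · intro t
          have := congrFun hz t
          simp only [Pi.zero_apply] at this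
          linarith [this]
        · intro t htR
          have hat : a t = false := by
            rcases Bool.eq_false_or_eq_true (a t) with h | h
            · exact absurd (mem_Rset.2 h) htR
            · exact h
          have h1 : y t = 0 := hysupp t hat
          have h2 : Su t = Hu t := by rw [hSu, act_spcol_not_mem hat]
          show y t - (Hu t - Su t) = 0
          rw [h1, h2]
          ring
        · intro t htR
          have hat : a t = true := mem_Rset.1 htR
          have h1 := hnew t hat
          have h2 := key a Hu t hat
          rw [← hSu] at h2
          have h3 : y t + c' t = u t + Hu t := by simpa using huc t
          have h4 : rsum x t = u t - Hu t := by simpa using hum t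
          -- ∑ sg t t' * (y t' - (Hu t' - Su t')) = 1 * (y t - (Hu t - Su t))
          have hexp : (∑ t', sg t t' * (fun t'' => y t'' - (Hu t'' - Su t'')) t')
              = (∑ t', sg t t' * y t') - ∑ t', sg t t' * (Hu t' - Su t') := by
            rw [← Finset.sum_sub_distrib]
            refine Finset.sum_congr rfl fun t' _ => ?_
            ring
          rw [hexp]
          -- h1 : -rsum x t + ∑ sg y + c' t = 0 ; h4 : rsum x t = u t - Hu t ; h3 : y t + c' t = u t + Hu t
          -- h2 : ∑ sg (Hu - Su) + Hu t + Su t = 0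
          have hsg_y : (∑ t', sg t t' * y t') = -2 * Hu t + y t := by linarith [h1, h3, h4]
          have hsg_y2 : (∑ t', sg t t' * (Hu t' - Su t')) = -2 * Hu t + (Hu t - Su t) := by
            linarith [h2]
          rw [hsg_y, hsg_y2]
          ring
      refine ⟨u, ?_, ?_⟩
      · intro t
        have h3 : y t + c' t = u t + Hu t := by simpa using huc t
        have hS : act (runSP w) u t = Su t := by rw [hrun u, ← hHu, ← hSu]
        rw [hS]
        have h5 := hyeq t
        linarith [h3, h5]
      · intro t
        have hr : rsum x' t = rsum x t + y t := by
          rw [rsum, Fin.sum_univ_castSucc (fun j => x' (t, j))]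
          rfl
        have h4 : rsum x t = u t - Hu t := by simpa using hum t
        have hS : act (runSP w) u t = Su t := by rw [hrun u, ← hHu, ← hSu]
        rw [hr, hS, h4, hyeq t]
        ring
    · -- (C3) injectivity
      intro x' hsupp hrow hms
      set y : Fin m → ℚ := fun t => x' (t, Fin.last n) with hy
      set x : Fin m × Fin n → ℚ := fun q => x' (q.1, q.2.castSucc) with hx
      have hxs : Supp w0 x := by
        rintro ⟨i, j⟩ hij
        exact hsupp (i, j.castSucc) hij
      have hysupp : ∀ t, a t = false → y t = 0 := by
        intro t hat
        exact hsupp (t, Fin.last n) hat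
      have hxr : RowEq w0 x (fun t => y t) := by
        rintro ⟨i, j⟩ hij
        have h := hrow (i, j.castSucc) hij
        rw [sum_split (fun q => ((adjEntry (i, j.castSucc) q : ℤ) : ℚ) * x' q)] at h
        have hA : (∑ q : Fin m × Fin n,
            ((adjEntry (i, j.castSucc) (q.1, q.2.castSucc) : ℤ) : ℚ) * x' (q.1, q.2.castSucc))
            = ∑ q : Fin m × Fin n, ((adjEntry (i, j) q : ℤ) : ℚ) * x q := by
          refine Finset.sum_congr rfl fun q _ => ?_
          rw [adjEntry_castSucc]
        have hB : (∑ t, ((adjEntry (i, j.castSucc) (t, Fin.last n) : ℤ) : ℚ) * x' (t, Fin.last n))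
            = y i := by
          have h1 : ∀ t, ((adjEntry (i, j.castSucc) (t, Fin.last n) : ℤ) : ℚ) * x' (t, Fin.last n)
              = if i = t then y t else 0 := by
            intro t
            rw [adjEntry_old_new]
            split_ifs <;> simp [hy]
          rw [Finset.sum_congr rfl (fun t _ => h1 t), Finset.sum_ite_eq, if_pos (Finset.mem_univ i)]
        rw [hA, hB] at h
        show (∑ q : Fin m × Fin n, ((adjEntry (i, j) q : ℤ) : ℚ) * x q) + y i = 0
        simpa using h
      have hnew : ∀ t, a t = true →
          -rsum x t + (∑ t', sg t t' * y t') = 0 := by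
        intro t hat
        have h := hrow (t, Fin.last n) hat
        rw [sum_split (fun q => ((adjEntry (t, Fin.last n) q : ℤ) : ℚ) * x' q)] at h
        have hA : (∑ q : Fin m × Fin n,
            ((adjEntry (t, Fin.last n) (q.1, q.2.castSucc) : ℤ) : ℚ) * x' (q.1, q.2.castSucc))
            = -rsum x t := by
          have h1 : ∀ q : Fin m × Fin n,
              ((adjEntry (t, Fin.last n) (q.1, q.2.castSucc) : ℤ) : ℚ) * x' (q.1, q.2.castSucc)
              = (if t = q.1 then (-1:ℚ) else 0) * x q := by
            intro q
            rw [adjEntry_new_old]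
          rw [Finset.sum_congr rfl (fun q _ => h1 q), sum_guard]
          rfl
        have hB : (∑ t', ((adjEntry (t, Fin.last n) (t', Fin.last n) : ℤ) : ℚ) * x' (t', Fin.last n))
            = ∑ t', sg t t' * y t' := by
          refine Finset.sum_congr rfl fun t' _ => ?_
          rw [adjEntry_new_new]
        rw [hA, hB] at h
        simpa using h
      have hrs : ∀ t, rsum x t = - y t := by
        intro t
        have h := hms t
        rw [rsum, Fin.sum_univ_castSucc (fun j => x' (t, j))] at h
        have : (∑ j : Fin n, x' (t, j.castSucc)) = rsum x t := rfl
        rw [this] at h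
        have : x' (t, Fin.last n) = y t := rfl
        rw [this] at h
        linarith [h]
      have hy0 : y = 0 := by
        apply skew_inj (Rset a) y (-1) (by norm_num)
        · intro t htR
          have hat : a t = false := by
            rcases Bool.eq_false_or_eq_true (a t) with h | h
            · exact absurd (mem_Rset.2 h) htR
            · exact h
          exact hysupp t hat
        · intro t htR
          have hat : a t = true := mem_Rset.1 htR
          have h1 := hnew t hat
          have h2 := hrs t
          linarith [h1, h2]
      have hx0 : x = 0 := by
        apply ih3 x hxs
        · have : (fun t : Fin m => y t) = (fun _ : Fin m => (0:ℚ)) := by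
            funext t
            rw [congrFun hy0 t]
            rfl
          rw [← this]
          exact hxr
        · intro t
          rw [hrs t, congrFun hy0 t]
          rfl
      funext p
      rcases p with ⟨i, pj⟩
      induction pj using Fin.lastCases with
      | last =>
        show y i = 0
        rw [congrFun hy0 i]
        rfl
      | cast j =>
        show x (i, j) = 0
        rw [congrFun hx0 (i, j)]
        rfl


/-! ### The determinant criterion -/

lemma mem_whites_iff {n : ℕ} (w : Fin n → Col m) (p : Fin m × Fin n) :
    p ∈ whites (Dg w) ↔ w p.2 p.1 = true := by
  unfold whites Dg
  simp

lemma not_white_false {n : ℕ} {w : Fin n → Col m} {q : Fin m × Fin n}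
    (hq : q ∉ whites (Dg w)) : w q.2 q.1 = false := by
  rcases Bool.eq_false_or_eq_true (w q.2 q.1) with h | h
  · exact absurd ((mem_whites_iff w q).2 h) hq
  · exact h

lemma sum_whites_eq {n : ℕ} (w : Fin n → Col m) (x : Fin m × Fin n → ℚ) (hxs : Supp w x)
    (f : Fin m × Fin n → ℚ) :
    (∑ q, f q * x q) = ∑ qq : {q : Fin m × Fin n // q ∈ whites (Dg w)}, f qq.1 * x qq.1 := by
  rw [Finset.sum_coe_sort (whites (Dg w)) (fun q => f q * x q)]
  symm
  apply Finset.sum_subset (Finset.subset_univ _)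
  intro q _ hq
  rw [hxs q (not_white_false hq)]
  ring

theorem det_zero_iff {n : ℕ} (w : Fin n → Col m) :
    (skewAdj (Dg w)).det = 0 ↔ ∃ u : Fin m → ℚ, u ≠ 0 ∧ act (runSP w) u = -u := by
  classical
  set N : Matrix {p : Fin m × Fin n // p ∈ whites (Dg w)}
      {p : Fin m × Fin n // p ∈ whites (Dg w)} ℚ
    := (skewAdj (Dg w)).map (fun z : ℤ => (z : ℚ)) with hN
  have hNe : ∀ p q, N p q = ((adjEntry p.1 q.1 : ℤ) : ℚ) := fun p q => rfl
  have hdet : ((skewAdj (Dg w)).det = 0) ↔ N.det = 0 := by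
    have h := RingHom.map_det (Int.castRingHom ℚ) (skewAdj (Dg w))
    have h2 : N.det = (((skewAdj (Dg w)).det : ℤ) : ℚ) := h.symm
    rw [h2]
    exact ⟨fun hh => by rw [hh]; norm_num, fun hh => by exact_mod_cast hh⟩
  rw [hdet, ← Matrix.exists_mulVec_eq_zero_iff]
  constructor
  · rintro ⟨v, hv0, hv⟩
    set x : Fin m × Fin n → ℚ :=
      fun p => if h : p ∈ whites (Dg w) then v ⟨p, h⟩ else 0 with hx
    have hxv : ∀ qq : {q : Fin m × Fin n // q ∈ whites (Dg w)}, x qq.1 = v qq := by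
      intro qq
      rw [hx]
      simp only
      rw [dif_pos qq.2]
    have hxs : Supp w x := by
      intro p hp
      have hpw : p ∉ whites (Dg w) := by
        rw [mem_whites_iff, hp]
        simp
      rw [hx]
      simp only
      rw [dif_neg hpw]
    have hxr : RowEq w x (fun _ => 0) := by
      intro p hp
      have hpw : p ∈ whites (Dg w) := (mem_whites_iff w p).2 hp
      have hmv := congrFun hv ⟨p, hpw⟩
      rw [Matrix.mulVec] at hmv
      rw [dotProduct] at hmv
      have hsum := sum_whites_eq w x hxs (fun q => ((adjEntry p q : ℤ) : ℚ))
      rw [hsum]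
      have : (∑ qq : {q : Fin m × Fin n // q ∈ whites (Dg w)},
          ((adjEntry p qq.1 : ℤ) : ℚ) * x qq.1)
          = ∑ qq : {q : Fin m × Fin n // q ∈ whites (Dg w)}, N ⟨p, hpw⟩ qq * v qq := by
        refine Finset.sum_congr rfl fun qq _ => ?_
        rw [hNe, hxv]
      rw [this]
      have h0 : (0 : {q : Fin m × Fin n // q ∈ whites (Dg w)} → ℚ) ⟨p, hpw⟩ = 0 := rfl
      rw [h0] at hmv
      rw [hmv]
      ring
    obtain ⟨u, huc, hum⟩ := (main w).2.1 x (fun _ => 0) hxs hxr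
    by_cases hu : u = 0
    · exfalso
      have hact : ∀ t, act (runSP w) u t = - u t := by
        intro t
        have h := huc t
        try simp only at h
        linarith
      have hrs : ∀ t, rsum x t = 0 := by
        intro t
        have h := hum t
        rw [h, hact t, hu]
        simp
      have hx0 := (main w).2.2 x hxs hxr hrs
      obtain ⟨qq, hqq⟩ := Function.ne_iff.1 hv0
      apply hqq
      rw [← hxv qq, hx0]
      rfl
    · refine ⟨u, hu, funext fun t => ?_⟩
      have h := huc t
      try simp only at h
      show act (runSP w) u t = -u t
      linarith
  · rintro ⟨u, hu0, hact⟩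
    obtain ⟨x, hxs, hxr, hxm⟩ := (main w).1 u
    refine ⟨fun qq => x qq.1, ?_, ?_⟩
    · obtain ⟨t, ht⟩ := Function.ne_iff.1 hu0
      have hsum : rsum x t = 2 * u t := by
        rw [hxm t, hact]
        simp
        ring
      have hex : ∃ j, x (t, j) ≠ 0 := by
        by_contra hc
        push_neg at hc
        have : rsum x t = 0 := Finset.sum_eq_zero fun j _ => hc j
        rw [this] at hsum
        have : u t = 0 := by linarith
        exact ht this
      obtain ⟨j, hj⟩ := hex
      have hw : (t, j) ∈ whites (Dg w) := by
        rw [mem_whites_iff]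
        rcases Bool.eq_false_or_eq_true (w j t) with h | h
        · exact h
        · exact absurd (hxs (t, j) h) hj
      exact Function.ne_iff.2 ⟨⟨(t, j), hw⟩, hj⟩
    · funext pp
      rw [Matrix.mulVec, dotProduct]
      have hp : w pp.1.2 pp.1.1 = true := (mem_whites_iff w pp.1).1 pp.2
      have hr := hxr pp.1 hp
      have hc : (fun t => u t + act (runSP w) u t) pp.1.1 = 0 := by
        rw [hact]
        simp
      rw [hc] at hr
      have hsum := sum_whites_eq w x hxs (fun q => ((adjEntry pp.1 q : ℤ) : ℚ))
      rw [hsum] at hr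
      have : (∑ qq : {q : Fin m × Fin n // q ∈ whites (Dg w)},
          N pp qq * x qq.1)
          = ∑ qq : {q : Fin m × Fin n // q ∈ whites (Dg w)},
            ((adjEntry pp.1 qq.1 : ℤ) : ℚ) * x qq.1 := by
        refine Finset.sum_congr rfl fun qq _ => ?_
        rw [hNe]
      rw [this]
      show _ = (0 : {q : Fin m × Fin n // q ∈ whites (Dg w)} → ℚ) pp
      have h0 : (0 : {q : Fin m × Fin n // q ∈ whites (Dg w)} → ℚ) pp = 0 := rfl
      rw [h0]
      linarith [hr]

theorem det_ne_zero_iff {n : ℕ} (w : Fin n → Col m) :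
    (skewAdj (Dg w)).det ≠ 0 ↔ ∀ u : Fin m → ℚ, act (runSP w) u = -u → u = 0 := by
  rw [Ne, det_zero_iff]
  push_neg
  constructor
  · intro h u hu
    by_contra hne
    exact (h u hne) hu
  · intro h u hu hact
    exact hu (h u hact)


/-! ### The automaton -/

def okCol (r : Fin m → Bool) (a : Col m) : Prop :=
  ∀ i, a i = false → (r i = false ∨ ∀ i' < i, a i' = false)

instance (r : Fin m → Bool) (a : Col m) : Decidable (okCol r a) := by
  unfold okCol
  infer_instance

abbrev AState (m : ℕ) := Bool × (Fin m → Bool) × SP m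

def stepSt (s : AState m) (a : Col m) : AState m :=
  (s.1 && decide (okCol s.2.1 a), fun i => s.2.1 i || a i, spMul (spcol a) s.2.2)

def initSt : AState m := (true, fun _ => false, spOne)

def runSt : {n : ℕ} → (Fin n → Col m) → AState m
  | 0, _ => initSt
  | n+1, w => stepSt (runSt (Fin.init w)) (w (Fin.last n))

lemma runSt_sp : ∀ {n : ℕ} (w : Fin n → Col m), (runSt w).2.2 = runSP w := by
  intro n
  induction n with
  | zero => intro w; rfl
  | succ n IH =>
    intro w
    show spMul (spcol (w (Fin.last n))) (runSt (Fin.init w)).2.2 = _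
    rw [IH (Fin.init w)]
    rfl

lemma runSt_r : ∀ {n : ℕ} (w : Fin n → Col m) (i : Fin m),
    ((runSt w).2.1 i = true ↔ ∃ j, w j i = true) := by
  intro n
  induction n with
  | zero =>
    intro w i
    constructor
    · intro h; exact absurd h (by simp [runSt, initSt])
    · rintro ⟨j, _⟩; exact j.elim0
  | succ n IH =>
    intro w i
    show ((runSt (Fin.init w)).2.1 i || (w (Fin.last n) i)) = true ↔ _
    rw [Bool.or_eq_true]
    rw [IH (Fin.init w) i]
    constructor
    · rintro (⟨j, hj⟩ | h)
      · exact ⟨j.castSucc, hj⟩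
      · exact ⟨Fin.last n, h⟩
    · rintro ⟨j, hj⟩
      induction j using Fin.lastCases with
      | last => exact Or.inr hj
      | cast j0 => exact Or.inl ⟨j0, hj⟩

lemma runSt_ok : ∀ {n : ℕ} (w : Fin n → Col m),
    ((runSt w).1 = true ↔ IsCauchon (Dg w)) := by
  intro n
  induction n with
  | zero =>
    intro w
    constructor
    · intro _ i j
      exact j.elim0
    · intro _
      rfl
  | succ n IH =>
    intro w
    show ((runSt (Fin.init w)).1 && decide (okCol (runSt (Fin.init w)).2.1 (w (Fin.last n)))) = true ↔ _
    rw [Bool.and_eq_true, IH (Fin.init w), decide_eq_true_eq]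
    set w0 := Fin.init w with hw0
    set a := w (Fin.last n) with ha
    constructor
    · rintro ⟨hC, hok⟩ i j hblack
      induction j using Fin.lastCases with
      | last =>
        have hai : a i = false := hblack
        rcases hok i hai with hr | hcolumn
        · left
          intro j' hj'
          have hj'n : (j' : ℕ) < n := by
            have := hj'
            simp [Fin.lt_def, Fin.last] at this
            omega
          have hcast : (⟨(j' : ℕ), hj'n⟩ : Fin n).castSucc = j' := by
            apply Fin.ext
            simp
          by_contra hcon
          have hwj : w0 ⟨(j' : ℕ), hj'n⟩ i = true := by
            rcases Bool.eq_false_or_eq_true (w0 ⟨(j' : ℕ), hj'n⟩ i) with h | h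
            · exact h
            · exfalso
              apply hcon
              show w j' i = false
              rw [← hcast]
              exact h
          have : (runSt w0).2.1 i = true := (runSt_r w0 i).2 ⟨_, hwj⟩
          rw [hr] at this
          exact absurd this (by simp)
        · right
          intro i' hi'
          exact hcolumn i' hi'
      | cast j0 =>
        have hb : w0 j0 i = false := hblack
        rcases hC i j0 hb with h1 | h2
        · left
          intro j' hj'
          have hj'n : (j' : ℕ) < n := by
            have h := hj'
            simp [Fin.lt_def] at h
            have := j0.is_lt
            omega
          have hcast : (⟨(j' : ℕ), hj'n⟩ : Fin n).castSucc = j' := by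
            apply Fin.ext
            simp
          have hlt : (⟨(j' : ℕ), hj'n⟩ : Fin n) < j0 := by
            simp only [Fin.lt_def] at hj' ⊢
            simpa using hj'
          have := h1 _ hlt
          show w j' i = false
          rw [← hcast]
          exact this
        · right
          exact h2
    · intro hC
      constructor
      · intro i j0 hb
        rcases hC i j0.castSucc hb with h1 | h2
        · left
          intro j' hj'
          exact h1 j'.castSucc (Fin.castSucc_lt_castSucc_iff.2 hj')
        · right
          exact h2
      · intro i hai
        rcases hC i (Fin.last n) hai with h1 | h2
        · left
          rcases Bool.eq_false_or_eq_true ((runSt w0).2.1 i) with h | h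
          · obtain ⟨j, hj⟩ := (runSt_r w0 i).1 h
            exfalso
            have hfalse : w0 j i = false := h1 j.castSucc (Fin.castSucc_lt_last j)
            rw [hfalse] at hj
            exact absurd hj (by simp)
          · exact h
        · right
          exact h2

/-- Full acceptance condition. -/
def acceptSt (s : AState m) : Prop :=
  s.1 = true ∧ ∀ u : Fin m → ℚ, act s.2.2 u = -u → u = 0

lemma accept_iff {n : ℕ} (w : Fin n → Col m) :
    acceptSt (runSt w) ↔ (IsCauchon (Dg w) ∧ (skewAdj (Dg w)).det ≠ 0) := by
  unfold acceptSt
  rw [runSt_ok w, runSt_sp w, det_ne_zero_iff w]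

/-! ### Counting via the transfer matrix -/

open Classical in
noncomputable def Tn (s s' : AState m) : ℕ :=
  (Finset.univ.filter (fun a : Col m => stepSt s a = s')).card

open Classical in
noncomputable def Tmat : Matrix (AState m) (AState m) ℚ := fun s s' => (Tn s s' : ℚ)

open Classical in
noncomputable def Nn (n : ℕ) (s : AState m) : ℕ :=
  ((Finset.univ : Finset (Fin n → Col m)).filter (fun w => runSt w = s)).card

lemma Nn_zero (s : AState m) : Nn 0 s = if (initSt : AState m) = s then 1 else 0 := by
  classical
  unfold Nn
  by_cases h : (initSt : AState m) = s
  · rw [if_pos h]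
    rw [Finset.filter_true_of_mem (fun w _ => (by exact h : runSt w = s))]
    rw [Finset.card_univ]
    exact Fintype.card_unique
  · rw [if_neg h]
    rw [Finset.filter_false_of_mem]
    · exact Finset.card_empty
    · intro w _ hc
      exact h hc

lemma Nn_succ (n : ℕ) (s : AState m) : Nn (n+1) s = ∑ s', Nn n s' * Tn s' s := by
  classical
  unfold Nn
  have hbij : ((Finset.univ : Finset (Fin (n+1) → Col m)).filter (fun w => runSt w = s)).card
      = ((Finset.univ : Finset ((Fin n → Col m) × Col m)).filter
          (fun p => stepSt (runSt p.1) p.2 = s)).card := by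
    apply Finset.card_bij (fun w _ => (Fin.init w, w (Fin.last n)))
    · intro w hw
      rw [Finset.mem_filter] at hw ⊢
      exact ⟨Finset.mem_univ _, hw.2⟩
    · intro w1 h1 w2 h2 heq
      have h1' := congrArg Prod.fst heq
      have h2' := congrArg Prod.snd heq
      simp only at h1' h2'
      funext j
      induction j using Fin.lastCases with
      | last => exact h2'
      | cast j0 => exact congrFun h1' j0
    · intro p hp
      refine ⟨Fin.snoc p.1 p.2, ?_, ?_⟩
      · rw [Finset.mem_filter] at hp ⊢
        refine ⟨Finset.mem_univ _, ?_⟩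
        show stepSt (runSt (Fin.init (Fin.snoc p.1 p.2 : Fin (n+1) → Col m)))
          ((Fin.snoc p.1 p.2 : Fin (n+1) → Col m) (Fin.last n)) = s
        rw [Fin.init_snoc, Fin.snoc_last]
        exact hp.2
      · rw [Fin.init_snoc, Fin.snoc_last]
  rw [hbij]
  have hprod : ((Finset.univ : Finset ((Fin n → Col m) × Col m)).filter
        (fun p => stepSt (runSt p.1) p.2 = s)).card
      = ∑ w' : Fin n → Col m, Tn (runSt w') s := by
    rw [Finset.card_eq_sum_card_fiberwise
      (f := Prod.fst) (t := (Finset.univ : Finset (Fin n → Col m)))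
      (fun x _ => Finset.mem_univ _)]
    refine Finset.sum_congr rfl fun w' _ => ?_
    unfold Tn
    apply Finset.card_bij (fun p _ => p.2)
    · intro p hp
      rw [Finset.mem_filter] at hp
      have hcond := (Finset.mem_filter.1 hp.1).2
      rw [Finset.mem_filter]
      refine ⟨Finset.mem_univ _, ?_⟩
      rw [hp.2] at hcond
      exact hcond
    · intro p1 h1 p2 h2 heq
      rw [Finset.mem_filter] at h1 h2
      have : p1.1 = p2.1 := by rw [h1.2, h2.2]
      exact Prod.ext this heq
    · intro aa ha
      rw [Finset.mem_filter] at ha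
      refine ⟨(w', aa), ?_, rfl⟩
      rw [Finset.mem_filter]
      refine ⟨?_, rfl⟩
      rw [Finset.mem_filter]
      exact ⟨Finset.mem_univ _, ha.2⟩
  rw [hprod]
  have hgroup : (∑ w' : Fin n → Col m, Tn (runSt w') s)
      = ∑ s' : AState m,
          ((Finset.univ : Finset (Fin n → Col m)).filter (fun w => runSt w = s')).card
            * Tn s' s := by
    rw [← Finset.sum_fiberwise_of_maps_to
      (fun (x : Fin n → Col m) (_ : x ∈ (Finset.univ : Finset (Fin n → Col m))) =>
        Finset.mem_univ (runSt x))
      (fun w' => Tn (runSt w') s)]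
    refine Finset.sum_congr rfl fun s' _ => ?_
    have hconst : ∀ w' ∈ (Finset.univ : Finset (Fin n → Col m)).filter
        (fun w => runSt w = s'), Tn (runSt w') s = Tn s' s := by
      intro w' hw'
      rw [(Finset.mem_filter.1 hw').2]
    rw [Finset.sum_congr rfl hconst, Finset.sum_const, smul_eq_mul]
  rw [hgroup]

lemma Nn_eq_pow : ∀ (n : ℕ) (s : AState m), (Nn n s : ℚ) = ((Tmat : Matrix (AState m) (AState m) ℚ) ^ n) initSt s := by
  intro n
  induction n with
  | zero =>
    intro s
    rw [Nn_zero, pow_zero, Matrix.one_apply]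
    split_ifs <;> simp
  | succ n IH =>
    intro s
    rw [Nn_succ, pow_succ, Matrix.mul_apply]
    push_cast
    refine Finset.sum_congr rfl fun s' _ => ?_
    rw [IH s']
    rfl

open Classical in
lemma P_eq_sum (n : ℕ) :
    (P m n : ℚ) = ∑ s ∈ Finset.univ.filter (fun s : AState m => acceptSt s),
      ((Tmat : Matrix (AState m) (AState m) ℚ) ^ n) initSt s := by
  classical
  have h1 : P m n = ((Finset.univ : Finset (Fin n → Col m)).filter
      (fun w => acceptSt (runSt w))).card := by
    unfold P
    apply Finset.card_bij (fun D _ => (fun j i => D i j : Fin n → Col m))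
    · intro D hD
      rw [Finset.mem_filter] at hD ⊢
      refine ⟨Finset.mem_univ _, ?_⟩
      rw [accept_iff]
      exact hD.2
    · intro D1 _ D2 _ heq
      funext i j
      exact congrFun (congrFun heq j) i
    · intro w hw
      rw [Finset.mem_filter] at hw
      refine ⟨Dg w, ?_, rfl⟩
      rw [Finset.mem_filter]
      refine ⟨Finset.mem_univ _, ?_⟩
      rw [accept_iff] at hw
      exact hw.2
  have h2 : ((Finset.univ : Finset (Fin n → Col m)).filter (fun w => acceptSt (runSt w))).card
      = ∑ s ∈ Finset.univ.filter (fun s : AState m => acceptSt s), Nn n s := by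
    rw [Finset.card_eq_sum_card_fiberwise (f := fun w : Fin n → Col m => runSt w)
      (t := Finset.univ.filter (fun s : AState m => acceptSt s))
      (fun w hw => by
        rw [Finset.mem_coe, Finset.mem_filter] at hw; rw [Finset.mem_coe, Finset.mem_filter]
        exact ⟨Finset.mem_univ _, hw.2⟩)]
    refine Finset.sum_congr rfl fun s hs => ?_
    unfold Nn
    congr 1
    ext w
    simp only [Finset.mem_filter, Finset.mem_univ, true_and]
    constructor
    · rintro ⟨_, h⟩
      exact h
    · intro h
      refine ⟨?_, h⟩
      rw [h]
      exact (Finset.mem_filter.1 hs).2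
  rw [h1, h2]
  push_cast
  exact Finset.sum_congr rfl fun s _ => Nn_eq_pow n s

end P18

theorem P_linear_recurrence (m : ℕ) (hm : 0 < m) :
    ∃ (d : ℕ) (c : Fin d → ℚ), ∀ n : ℕ, d ≤ n →
      (P m n : ℚ) = ∑ i : Fin d, c i * (P m (n - (i.1 + 1)) : ℚ) := by
  classical
  set T : Matrix (P18.AState m) (P18.AState m) ℚ := P18.Tmat with hT
  set d := Fintype.card (P18.AState m) with hd
  have hmonic := T.charpoly_monic
  have hdeg : T.charpoly.natDegree = d := T.charpoly_natDegree_eq_dim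
  have hCH := T.aeval_self_charpoly
  have hTd : T ^ d = ∑ k ∈ Finset.range d, (-(T.charpoly.coeff k)) • T ^ k := by
    have h1 := hmonic.as_sum
    rw [hdeg] at h1
    have h2 := congrArg (Polynomial.aeval T) h1
    rw [hCH, map_add, Polynomial.aeval_X_pow, map_sum] at h2
    have h3 : ∀ k, (Polynomial.aeval T) (Polynomial.C (T.charpoly.coeff k) * Polynomial.X ^ k)
        = (T.charpoly.coeff k) • T ^ k := by
      intro k
      rw [map_mul, Polynomial.aeval_C, Polynomial.aeval_X_pow, Algebra.smul_def]
    rw [Finset.sum_congr rfl (fun k _ => h3 k)] at h2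
    have h4 : T ^ d = -(∑ k ∈ Finset.range d, (T.charpoly.coeff k) • T ^ k) :=
      add_eq_zero_iff_eq_neg.1 h2.symm
    rw [h4, ← Finset.sum_neg_distrib]
    exact Finset.sum_congr rfl fun k _ => (neg_smul _ _).symm
  refine ⟨d, fun i => -(T.charpoly.coeff (d - 1 - i.1)), ?_⟩
  intro n hn
  have hTn : T ^ n = ∑ k ∈ Finset.range d, (-(T.charpoly.coeff k)) • T ^ (n - d + k) := by
    have hsplit : T ^ n = T ^ (n - d) * T ^ d := by
      rw [← pow_add]
      congr 1
      omega
    rw [hsplit, hTd, Finset.mul_sum]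
    refine Finset.sum_congr rfl fun k _ => ?_
    rw [Matrix.mul_smul, ← pow_add]
  have hPn := P18.P_eq_sum (m := m) n
  rw [← hT] at hPn
  rw [hPn, hTn]
  have hswap : (∑ s ∈ Finset.univ.filter (fun s : P18.AState m => P18.acceptSt s),
        (∑ k ∈ Finset.range d, (-(T.charpoly.coeff k)) • T ^ (n - d + k)) P18.initSt s)
      = ∑ k ∈ Finset.range d, (-(T.charpoly.coeff k)) *
          ∑ s ∈ Finset.univ.filter (fun s : P18.AState m => P18.acceptSt s),
            (T ^ (n - d + k)) P18.initSt s := by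
    have h1 : ∀ s, (∑ k ∈ Finset.range d, (-(T.charpoly.coeff k)) • T ^ (n - d + k)) P18.initSt s
        = ∑ k ∈ Finset.range d, (-(T.charpoly.coeff k)) * (T ^ (n - d + k)) P18.initSt s := by
      intro s
      rw [Matrix.sum_apply]
      refine Finset.sum_congr rfl fun k _ => ?_
      rw [Matrix.smul_apply, smul_eq_mul]
    rw [Finset.sum_congr rfl (fun s _ => h1 s), Finset.sum_comm]
    refine Finset.sum_congr rfl fun k _ => ?_
    rw [Finset.mul_sum]
  rw [hswap]
  have hPs : ∀ k, (∑ s ∈ Finset.univ.filter (fun s : P18.AState m => P18.acceptSt s),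
      (T ^ (n - d + k)) P18.initSt s) = (P m (n - d + k) : ℚ) := by
    intro k
    have := P18.P_eq_sum (m := m) (n - d + k)
    rw [← hT] at this
    exact this.symm
  rw [Finset.sum_congr rfl (fun k _ => by rw [hPs k])]
  have hfin := Fin.sum_univ_eq_sum_range
    (fun j => -(T.charpoly.coeff (d - 1 - j)) * (P m (n - (j + 1)) : ℚ)) d
  rw [hfin]
  have hreflect := Finset.sum_range_reflect
    (fun k => (-(T.charpoly.coeff k)) * (P m (n - d + k) : ℚ)) d
  rw [← hreflect]
  refine Finset.sum_congr rfl fun j hj => ?_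
  have hjd : j < d := Finset.mem_range.1 hj
  have harith : n - d + (d - 1 - j) = n - (j + 1) := by omega
  rw [harith]
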